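/- Let m ≥ 0 and let f be a monic irreducible polynomial over F_{q²} of degree 2m+1 with f(0) ≠ 0. Let ord(f) denote the multiplicative order of the image of X in the unit group of the field F_{q²}[X]/(f) (equivalently, the multiplicative order of any root of f in its splitting field). Then f is ~-symmetric (f̃ = f) if and only if ord(f) ∈ D̃_m. -/

import Mathlib

open Matrix Polynomial
open scoped Classical

noncomputable section

/-- `eord q d` : the multiplicative order of `q` in `(ℤ/dℤ)ˣ`. -/
def eord (q d : ℕ) : ℕ := orderOf (q : ZMod d)

/-- `Dset q m` is the set `D_m`. -/
def Dset (q m : ℕ) : Set ℕ := {x | 0 < x ∧ x ∣ q ^ m + 1 ∧ ∀ t < m, ¬ x ∣ q ^ t + 1}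

/-- `DtildeSet q m` is the set `D̃_m`. -/
def DtildeSet (q m : ℕ) : Set ℕ :=
  {y | 0 < y ∧ y ∣ q ^ (2 * m + 1) + 1 ∧ ∀ t, Odd t → t < 2 * m + 1 → ¬ y ∣ q ^ t + 1}

/-- `oo M = 2` if `M` is even, `1` otherwise. -/
def oo (M : ℕ) : ℕ := if Even M then 2 else 1

/-- The power series `1 + Σ_{m ≥ 1} (c m) · z^(e·m)` in `ℚ⟦z⟧`. -/
def ser (e : ℕ) (c : ℕ → ℚ) : PowerSeries ℚ :=
  PowerSeries.mk fun n => if n = 0 then 1 else if e ∣ n then c (n / e) else 0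

/-- The antidiagonal matrix `Π_m`. -/
def antidiagMat (F : Type*) [Field F] (m : ℕ) : Matrix (Fin m) (Fin m) F :=
  Matrix.of fun i j => if (i : ℕ) + (j : ℕ) + 1 = m then 1 else 0

/-- The Gram matrix `[[0, Π],[−Π, 0]]` of the standard symplectic form (for `m = 2n`). -/
def sympForm (F : Type*) [Field F] (m : ℕ) : Matrix (Fin m) (Fin m) F :=
  Matrix.of fun i j =>
    if (i : ℕ) + (j : ℕ) + 1 = m then (if 2 * (i : ℕ) < m then 1 else -1) else 0

/-- The Gram matrix `J_-` of the minus-type symmetric form in even dimension `m = 2n`. -/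
def minusForm {F : Type*} [Field F] (δ : F) (m : ℕ) : Matrix (Fin m) (Fin m) F :=
  Matrix.of fun i j =>
    if (i : ℕ) = j ∧ 2 * (i : ℕ) + 2 = m then 1
    else if (i : ℕ) = j ∧ 2 * (i : ℕ) = m then -δ
    else if (i : ℕ) + (j : ℕ) + 1 = m ∧ 2 * (i : ℕ) + 2 ≠ m ∧ 2 * (i : ℕ) ≠ m then 1
    else 0

/-- The Gram matrix `J_0` (with middle entry `α`) in odd dimension `m = 2n+1`. -/
def oddForm {F : Type*} [Field F] (α : F) (m : ℕ) : Matrix (Fin m) (Fin m) F :=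
  Matrix.of fun i j =>
    if (i : ℕ) = j ∧ 2 * (i : ℕ) + 1 = m then α
    else if (i : ℕ) + (j : ℕ) + 1 = m then 1 else 0

/-- The subgroup `{A ∈ GL_m(F) | ᵗA · J · A = J}`. -/
def formGroup {F : Type*} [Field F] {m : ℕ} (J : Matrix (Fin m) (Fin m) F) :
    Subgroup (GL (Fin m) F) where
  carrier := {A | (A : Matrix (Fin m) (Fin m) F)ᵀ * J * (A : Matrix (Fin m) (Fin m) F) = J}
  one_mem' := by simp
  mul_mem' := by
    intro a b ha hb
    simp only [Set.mem_setOf_eq, Units.val_mul, Matrix.transpose_mul] at *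
    calc (↑b)ᵀ * (↑a)ᵀ * J * ((a : Matrix (Fin m) (Fin m) F) * ↑b)
        = (↑b)ᵀ * ((↑a)ᵀ * J * ↑a) * ↑b := by
          simp only [Matrix.mul_assoc]
      _ = J := by rw [ha]; exact hb
  inv_mem' := by
    intro a ha
    simp only [Set.mem_setOf_eq] at *
    calc ((a⁻¹ : GL (Fin m) F) : Matrix (Fin m) (Fin m) F)ᵀ * J * ↑(a⁻¹)
        = (↑(a⁻¹) : Matrix (Fin m) (Fin m) F)ᵀ * ((↑a)ᵀ * J * ↑a) * ↑(a⁻¹) := by rw [ha]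
      _ = ((a : Matrix (Fin m) (Fin m) F) * ↑(a⁻¹))ᵀ * J *
            ((a : Matrix (Fin m) (Fin m) F) * ↑(a⁻¹)) := by
          rw [Matrix.transpose_mul]
          simp only [Matrix.mul_assoc]
      _ = J := by rw [a.mul_inv]; simp

/-- The subgroup `{A ∈ GL_m(F) | A · J · ᵗ(σ(A)) = J}`, where `σ` acts entrywise. -/
def conjTransGroup {F : Type*} [Field F] (σ : F →+* F) {m : ℕ}
    (J : Matrix (Fin m) (Fin m) F) : Subgroup (GL (Fin m) F) where
  carrier := {A | (A : Matrix (Fin m) (Fin m) F) * J *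
      ((A : Matrix (Fin m) (Fin m) F).map σ)ᵀ = J}
  one_mem' := by simp [Matrix.map_one]
  mul_mem' := by
    intro a b ha hb
    simp only [Set.mem_setOf_eq, Units.val_mul, Matrix.map_mul, Matrix.transpose_mul] at *
    calc (a : Matrix (Fin m) (Fin m) F) * ↑b * J *
          (((b : Matrix (Fin m) (Fin m) F).map σ)ᵀ * ((a : Matrix (Fin m) (Fin m) F).map σ)ᵀ)
        = (a : Matrix (Fin m) (Fin m) F) *
            ((b : Matrix (Fin m) (Fin m) F) * J * ((b : Matrix (Fin m) (Fin m) F).map σ)ᵀ) *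
            ((a : Matrix (Fin m) (Fin m) F).map σ)ᵀ := by
          simp only [Matrix.mul_assoc]
      _ = J := by rw [hb]; exact ha
  inv_mem' := by
    intro a ha
    simp only [Set.mem_setOf_eq] at *
    have h1 : ((a⁻¹ : GL (Fin m) F) : Matrix (Fin m) (Fin m) F) *
        ((a : GL (Fin m) F) : Matrix (Fin m) (Fin m) F) = 1 := a.inv_mul
    have h2 : ((a⁻¹ : GL (Fin m) F) : Matrix (Fin m) (Fin m) F).map σ *
        ((a : GL (Fin m) F) : Matrix (Fin m) (Fin m) F).map σ = 1 := by
      rw [← Matrix.map_mul, h1]; exact Matrix.map_one _ (map_zero σ) (map_one σ)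
    calc ((a⁻¹ : GL (Fin m) F) : Matrix (Fin m) (Fin m) F) * J *
          (((a⁻¹ : GL (Fin m) F) : Matrix (Fin m) (Fin m) F).map σ)ᵀ
        = (↑(a⁻¹) : Matrix (Fin m) (Fin m) F) *
            ((a : Matrix (Fin m) (Fin m) F) * J * ((a : Matrix (Fin m) (Fin m) F).map σ)ᵀ) *
            ((↑(a⁻¹) : Matrix (Fin m) (Fin m) F).map σ)ᵀ := by rw [ha]
      _ = ((↑(a⁻¹) : Matrix (Fin m) (Fin m) F) * ↑a) * J *
            ((↑(a⁻¹) : Matrix (Fin m) (Fin m) F).map σ *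
              ((a : Matrix (Fin m) (Fin m) F)).map σ)ᵀ := by
          rw [Matrix.transpose_mul]
          simp only [Matrix.mul_assoc]
      _ = J := by rw [h1, h2, Matrix.transpose_one, one_mul, mul_one]

/-- The symplectic group `Sp_m(F)` (`m` even) w.r.t. `sympForm`. -/
def SpGrp (F : Type*) [Field F] (m : ℕ) : Subgroup (GL (Fin m) F) := formGroup (sympForm F m)

/-- Orthogonal groups: `OGrp δ true m = O^+_m`, `OGrp δ false m = O^-_m`
(in odd dimension, `+` uses the Gram matrix `J_0` with `α = 1`, i.e. the antidiagonal,
and `-` uses `α = δ`). -/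
def OGrp {F : Type*} [Field F] (δ : F) (ε : Bool) (m : ℕ) : Subgroup (GL (Fin m) F) :=
  if ε then formGroup (antidiagMat F m)
  else if Even m then formGroup (minusForm δ m) else formGroup (oddForm δ m)

/-- The unitary group `U_m((p^a)²)`, living in `GL_m(F_{p^(2a)})`. -/
def UGrp (p a : ℕ) [Fact p.Prime] (m : ℕ) : Subgroup (GL (Fin m) (GaloisField p (2 * a))) :=
  conjTransGroup (iterateFrobenius (GaloisField p (2 * a)) p a)
    (antidiagMat (GaloisField p (2 * a)) m)

/-- An element of `GL_m(F)` is semisimple iff its minimal polynomial over `F` is squarefree. -/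
def IsSSMat {F : Type*} [Field F] {m : ℕ} (x : GL (Fin m) F) : Prop :=
  Squarefree (minpoly F (x : Matrix (Fin m) (Fin m) F))

/-- Fulman's centralizer-order quantity
`c(λ,Q) = Q^(Σᵢ (λ'ᵢ)²) · Π_i Π_{j=1}^{mᵢ(λ)} (1 − Q^(−j))`. -/
def cInd (Q : ℚ) {n : ℕ} (l : Nat.Partition n) : ℚ :=
  Q ^ (∑ i ∈ Finset.Icc 1 n, ((l.parts.filter fun t => i ≤ t).card) ^ 2) *
    ∏ i ∈ Finset.Icc 1 n, ∏ j ∈ Finset.Icc 1 (l.parts.count i), (1 - Q⁻¹ ^ j)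

/-- `Σ_{λ ⊢ m, λ₁ ≤ b} 1 / c(λ, Q)`. -/
def partSum (b : ℕ) (Q : ℚ) (m : ℕ) : ℚ :=
  ∑ l : Nat.Partition m, if l.parts.sup ≤ b then (cInd Q l)⁻¹ else 0

/-- The reciprocal `f*` of a polynomial `f`: `f*(X) = f(0)⁻¹ · X^(deg f) · f(1/X)`. -/
def recipPoly {F : Type*} [Field F] (f : Polynomial F) : Polynomial F :=
  Polynomial.C ((f.coeff 0)⁻¹) * f.reverse

/-- `f̃(X) = (σ(f(0)))⁻¹ · X^(deg f) · f̄(1/X)` where `f̄` applies `σ` to the coefficients. -/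
def tildePoly {F : Type*} [Field F] (σ : F →+* F) (f : Polynomial F) : Polynomial F :=
  Polynomial.C ((σ (f.coeff 0))⁻¹) * (f.map σ).reverse

/-- Wall's centralizer order for a symplectic signed partition given by the partition `l`
together with the set `S` of even parts carrying the sign `−`. -/
def cSpVal (p k : ℕ) [Fact p.Prime] (δ : GaloisField p k) {n : ℕ}
    (l : Nat.Partition n) (S : Finset ℕ) : ℚ :=
  ((p ^ k : ℕ) : ℚ) ^ (∑ μ ∈ Finset.Icc 1 n, ∑ ν ∈ Finset.Icc 1 n,
      if μ < ν then μ * l.parts.count μ * l.parts.count ν else 0) *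
    ((p ^ k : ℕ) : ℚ) ^ ((∑ μ ∈ Finset.Icc 1 n, (μ - 1) * l.parts.count μ ^ 2 +
      ∑ μ ∈ Finset.Icc 1 n, if Even μ then l.parts.count μ else 0) / 2) *
    ∏ μ ∈ Finset.Icc 1 n,
      if Odd μ then (Nat.card (SpGrp (GaloisField p k) (l.parts.count μ)) : ℚ)
      else if μ ∈ S then (Nat.card (OGrp δ false (l.parts.count μ)) : ℚ)
      else (Nat.card (OGrp δ true (l.parts.count μ)) : ℚ)

/-- `Σ_{λ^± symplectic signed partition of n, λ₁ ≤ bound} 1 / c_Sp(λ^±)`. -/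
def sspSum (p k : ℕ) [Fact p.Prime] (δ : GaloisField p k) (bound n : ℕ) : ℚ :=
  ∑ l : Nat.Partition n, ∑ S ∈ (l.parts.toFinset.filter fun μ => Even μ).powerset,
    if (∀ μ, Odd μ → Even (l.parts.count μ)) ∧ l.parts.sup ≤ bound then
      (cSpVal p k δ l S)⁻¹ else 0

/-- Wall's centralizer order for an orthogonal signed partition given by the partition `l`
together with the set `S` of odd parts carrying the sign `−`. -/
def cOVal (p k : ℕ) [Fact p.Prime] (δ : GaloisField p k) {n : ℕ}
    (l : Nat.Partition n) (S : Finset ℕ) : ℚ :=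
  ((p ^ k : ℕ) : ℚ) ^ (∑ μ ∈ Finset.Icc 1 n, ∑ ν ∈ Finset.Icc 1 n,
      if μ < ν then μ * l.parts.count μ * l.parts.count ν else 0) *
    ((p ^ k : ℕ) : ℚ) ^ ((∑ μ ∈ Finset.Icc 1 n, (μ - 1) * l.parts.count μ ^ 2) / 2) *
    ∏ μ ∈ Finset.Icc 1 n,
      if Odd μ then
        (if μ ∈ S then (Nat.card (OGrp δ false (l.parts.count μ)) : ℚ)
         else (Nat.card (OGrp δ true (l.parts.count μ)) : ℚ))
      else (((p ^ k : ℕ) : ℚ) ^ (l.parts.count μ / 2))⁻¹ *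
        (Nat.card (SpGrp (GaloisField p k) (l.parts.count μ)) : ℚ)

/-- `Σ_{λ^± orthogonal signed partition of n, λ₁ ≤ bound} 1 / c_O(λ^±)`. -/
def ospSum (p k : ℕ) [Fact p.Prime] (δ : GaloisField p k) (bound n : ℕ) : ℚ :=
  ∑ l : Nat.Partition n, ∑ S ∈ (l.parts.toFinset.filter fun μ => Odd μ).powerset,
    if (∀ μ, Even μ → Even (l.parts.count μ)) ∧ l.parts.sup ≤ bound then
      (cOVal p k δ l S)⁻¹ else 0

/-- The unipotent Jordan block of size `s`. -/
def jordanBlock (F : Type*) [Field F] (s : ℕ) : Matrix (Fin s) (Fin s) F :=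
  Matrix.of fun i j => if j = i then 1 else if (j : ℕ) = (i : ℕ) + 1 then 1 else 0

/-- The block-diagonal unipotent matrix `J_λ` associated to the list of parts `l`. -/
def jordanMat (F : Type*) [Field F] (l : List ℕ) :
    Matrix (Σ i : Fin l.length, Fin (l.get i)) (Σ i : Fin l.length, Fin (l.get i)) F :=
  Matrix.blockDiagonal' fun i => jordanBlock F (l.get i)


lemma nt_min (q y m : ℕ) (hy : 0 < y)
    (hord : orderOf ((q : ZMod y) ^ 2) = 2 * m + 1) :
    ∀ t, Odd t → t < 2 * m + 1 → ¬ y ∣ q ^ t + 1 := by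
  haveI : NeZero y := ⟨hy.ne'⟩
  intro t ht hlt hdvd
  have h0 : ((q ^ t + 1 : ℕ) : ZMod y) = 0 := (ZMod.natCast_eq_zero_iff _ _).mpr hdvd
  push_cast at h0
  have hu : (q : ZMod y) ^ t = -1 := by linear_combination h0
  have h2 : ((q : ZMod y) ^ 2) ^ t = 1 := by
    rw [← pow_mul, mul_comm, pow_mul, hu]; ring
  have hdv := orderOf_dvd_of_pow_eq_one h2
  rw [hord] at hdv
  exact absurd (Nat.le_of_dvd ht.pos hdv) (by omega)

lemma nt_fwd (q y m : ℕ) (hy : 0 < y)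
    (hord : orderOf ((q : ZMod y) ^ 2) = 2 * m + 1)
    (hex : ∃ i, i < 2 * m + 1 ∧ y ∣ q ^ (2 * i) + q) :
    y ∣ q ^ (2 * m + 1) + 1 := by
  haveI : NeZero y := ⟨hy.ne'⟩
  obtain ⟨i, hi, hdvd⟩ := hex
  set u : ZMod y := (q : ZMod y) with hu
  have h0 : ((q ^ (2 * i) + q : ℕ) : ZMod y) = 0 :=
    (ZMod.natCast_eq_zero_iff _ _).mpr hdvd
  push_cast at h0
  have hA : u ^ (2 * i) = -u := by rw [hu]; linear_combination h0
  have hone : (u ^ 2) ^ (2 * m + 1) = 1 := by rw [← hord]; exact pow_orderOf_eq_one _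
  have hu2r : u ^ (2 * (2 * m + 1)) = 1 := by
    rw [pow_mul]; exact hone
  have key : u ^ (2 * m + 1) = -1 := by
    rcases Nat.eq_zero_or_pos i with hi0 | hipos
    · subst hi0
      simp only [Nat.mul_zero, pow_zero] at hA
      have hum : u = -1 := by linear_combination hA
      have h1 : (u ^ 2) ^ 1 = 1 := by rw [hum]; ring
      have hdv := orderOf_dvd_of_pow_eq_one h1
      rw [hord] at hdv
      have hm0 : m = 0 := by
        have := Nat.le_of_dvd one_pos hdv; omega
      subst hm0
      simpa using hum
    · have e2 : (u ^ 2) ^ (2 * i) = u ^ 2 := by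
        have hsq : (u ^ (2 * i)) ^ 2 = (-u) ^ 2 := by rw [hA]
        calc (u ^ 2) ^ (2 * i) = (u ^ (2 * i)) ^ 2 := by
              rw [← pow_mul, ← pow_mul]; ring_nf
          _ = (-u) ^ 2 := hsq
          _ = u ^ 2 := by ring
      have h1 : (u ^ 2) ^ (2 * i - 1) = 1 := by
        calc (u ^ 2) ^ (2 * i - 1)
            = (u ^ 2) ^ (2 * i - 1) * (u ^ 2) ^ (2 * m + 1) := by rw [hone, mul_one]
          _ = (u ^ 2) ^ (2 * i) * (u ^ 2) ^ (2 * m) := by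
              rw [← pow_add, ← pow_add]; congr 1; omega
          _ = (u ^ 2) ^ (2 * m + 1) := by
              rw [e2, ← pow_succ']
          _ = 1 := hone
      have hdv := orderOf_dvd_of_pow_eq_one h1
      rw [hord] at hdv
      have hle := Nat.le_of_dvd (by omega) hdv
      have hdv2 : (2 * m + 1) ∣ (2 * i - 1) - (2 * m + 1) := Nat.dvd_sub hdv dvd_rfl
      have hz : (2 * i - 1) - (2 * m + 1) = 0 := by
        by_contra hne
        exact absurd (Nat.le_of_dvd (Nat.pos_of_ne_zero hne) hdv2) (by omega)
      have h2i : 2 * i = 2 * m + 2 := by omega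
      rw [h2i] at hA
      calc u ^ (2 * m + 1)
          = u ^ (2 * m + 1) * u ^ (2 * (2 * m + 1)) := by rw [hu2r, mul_one]
        _ = u ^ (2 * m + 2) * u ^ (4 * m + 1) := by
            rw [← pow_add, ← pow_add]; congr 1; omega
        _ = -(u ^ (4 * m + 2)) := by rw [hA, neg_mul, ← pow_succ']
        _ = -1 := by
            have h42 : u ^ (4 * m + 2) = 1 := by rw [← hu2r]; congr 1; omega
            rw [h42]
  have : ((q ^ (2 * m + 1) + 1 : ℕ) : ZMod y) = 0 := by
    push_cast
    rw [← hu]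
    linear_combination key
  exact (ZMod.natCast_eq_zero_iff _ _).mp this


lemma frob_aeval_comm {F K : Type*} [Field F] [Field K] [Algebra F K]
    (σ : F →+* F) (φ : K →+* K)
    (hcomm : ∀ a : F, φ (algebraMap F K a) = algebraMap F K (σ a))
    (x : K) (g : Polynomial F) :
    Polynomial.aeval (φ x) (g.map σ) = φ (Polynomial.aeval x g) := by
  rw [Polynomial.aeval_def, Polynomial.aeval_def, Polynomial.eval₂_map, Polynomial.hom_eval₂]
  have hcomp : (algebraMap F K).comp σ = φ.comp (algebraMap F K) :=
    RingHom.ext fun a => (hcomm a).symm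
  rw [hcomp]

/-- A monic irreducible polynomial of odd degree `2m+1` over `F_{q²}` with
nonzero constant term is `~`-symmetric iff the order of (a root of) `f` lies in `D̃_m`. -/
theorem statement8 (p k m : ℕ) [Fact p.Prime] (hodd : Odd p) (hk : k ≠ 0)
    (f : Polynomial (GaloisField p (2 * k))) (hf : f.Monic) (hirr : Irreducible f)
    (hdeg : f.natDegree = 2 * m + 1) (h0 : f.coeff 0 ≠ 0) :
    tildePoly (iterateFrobenius (GaloisField p (2 * k)) p k) f = f ↔
      orderOf (AdjoinRoot.root f) ∈ DtildeSet (p ^ k) m := by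
  classical
  haveI := Fact.mk hirr
  set F := GaloisField p (2 * k) with hFdef
  letI : Fintype F := Fintype.ofFinite F
  have hppr : p.Prime := Fact.out
  have hcardF : Fintype.card F = p ^ (2 * k) := by
    rw [← Nat.card_eq_fintype_card]
    exact GaloisField.card p (2 * k) (by omega)
  have hf0 : f ≠ 0 := hf.ne_zero
  set K := AdjoinRoot f with hKdef
  haveI : CharP K p := charP_of_injective_algebraMap (algebraMap F K).injective p
  haveI : Module.Finite F K := (AdjoinRoot.powerBasis hf0).finite
  haveI : Finite K := Module.finite_of_finite F
  letI : Fintype K := Fintype.ofFinite K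
  set α : K := AdjoinRoot.root f with hαdef
  have hroot : Polynomial.aeval α f = 0 := by
    rw [AdjoinRoot.aeval_eq, AdjoinRoot.mk_self]
  have hα0 : α ≠ 0 := by
    intro h
    apply h0
    have h1 := hroot
    rw [h, Polynomial.aeval_def, Polynomial.eval₂_at_zero] at h1
    exact (map_eq_zero_iff _ (algebraMap F K).injective).mp h1
  have hfr : Module.finrank F K = 2 * m + 1 := by
    rw [(AdjoinRoot.powerBasis hf0).finrank]
    exact hdeg
  have hcardK : Fintype.card K = (p ^ (2 * k)) ^ (2 * m + 1) := by
    rw [Module.card_eq_pow_finrank (K := F) (V := K), hcardF, hfr]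
  set y := orderOf α with hydef
  have hcard1 : 1 ≤ Fintype.card K := Fintype.card_pos
  have hαpow : α ^ (Fintype.card K - 1) = 1 := FiniteField.pow_card_sub_one_eq_one α hα0
  have hfin : IsOfFinOrder α := by
    refine isOfFinOrder_iff_pow_eq_one.mpr ⟨Fintype.card K - 1, ?_, hαpow⟩
    have : 1 < Fintype.card K := Fintype.one_lt_card
    omega
  have hypos : 0 < y := hfin.orderOf_pos
  -- helper exponent identities
  have hQpow : ∀ i : ℕ, ((p : ℕ) ^ (2 * k)) ^ i = (p ^ k) ^ (2 * i) := by
    intro i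
    rw [← pow_mul, ← pow_mul]
    congr 1
    ring
  have hfixF : ∀ (s : ℕ) (a : F), a ^ p ^ (2 * k * s) = a := by
    intro s a
    rw [show p ^ (2 * k * s) = (p ^ (2 * k)) ^ s from pow_mul p (2 * k) s, ← hcardF]
    exact FiniteField.pow_card_pow s a
  have haeval_pow : ∀ (s : ℕ) (x : K) (g : Polynomial F),
      Polynomial.aeval (x ^ p ^ (2 * k * s)) g = (Polynomial.aeval x g) ^ p ^ (2 * k * s) := by
    intro s x g
    have hc : ∀ a : F, (iterateFrobenius K p (2 * k * s)) (algebraMap F K a)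
        = algebraMap F K ((RingHom.id F) a) := by
      intro a
      rw [RingHom.id_apply, iterateFrobenius_def, ← map_pow, hfixF s a]
    have h := frob_aeval_comm (RingHom.id F) (iterateFrobenius K p (2 * k * s)) hc x g
    rw [Polynomial.map_id] at h
    simpa [iterateFrobenius_def] using h
  have haeval_q : ∀ (x : K) (g : Polynomial F),
      Polynomial.aeval (x ^ p ^ k) (g.map (iterateFrobenius F p k))
        = (Polynomial.aeval x g) ^ p ^ k := by
    intro x g
    have hc : ∀ a : F, (iterateFrobenius K p k) (algebraMap F K a)
        = algebraMap F K ((iterateFrobenius F p k) a) := by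
      intro a
      rw [iterateFrobenius_def, iterateFrobenius_def, map_pow]
    have h := frob_aeval_comm (iterateFrobenius F p k) (iterateFrobenius K p k) hc x g
    simpa [iterateFrobenius_def] using h
  -- no proper "subfield" contains α : frobenius orbit size
  have horb : ∀ t : ℕ, 0 < t → t < 2 * m + 1 → α ^ ((p : ℕ) ^ (2 * k)) ^ t ≠ α := by
    intro t ht hlt heq
    have hall : ∀ x : K, x ^ p ^ (2 * k * t) = x := by
      intro x
      obtain ⟨g, rfl⟩ := AdjoinRoot.mk_surjective x
      rw [← AdjoinRoot.aeval_eq, ← haeval_pow t α g,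
        show p ^ (2 * k * t) = (p ^ (2 * k)) ^ t from pow_mul p (2 * k) t, heq]
    have hplt : 1 < p := hppr.one_lt
    have hkt : 2 * k * t ≠ 0 := by positivity
    have hle : Fintype.card K ≤ p ^ (2 * k * t) := by
      have hPdeg : (X ^ p ^ (2 * k * t) - X : Polynomial K).natDegree = p ^ (2 * k * t) :=
        FiniteField.X_pow_card_pow_sub_X_natDegree_eq K hkt hplt
      have hP0 : (X ^ p ^ (2 * k * t) - X : Polynomial K) ≠ 0 :=
        FiniteField.X_pow_card_pow_sub_X_ne_zero K hkt hplt
      have hsub : Finset.univ ⊆ (X ^ p ^ (2 * k * t) - X : Polynomial K).roots.toFinset := by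
        intro x _
        rw [Multiset.mem_toFinset, Polynomial.mem_roots hP0]
        simp [Polynomial.IsRoot, hall x]
      calc Fintype.card K = Finset.univ.card := Finset.card_univ.symm
        _ ≤ (X ^ p ^ (2 * k * t) - X : Polynomial K).roots.toFinset.card :=
            Finset.card_le_card hsub
        _ ≤ Multiset.card (X ^ p ^ (2 * k * t) - X : Polynomial K).roots :=
            Multiset.toFinset_card_le _
        _ ≤ _ := Polynomial.card_roots' _
        _ = _ := hPdeg
    rw [hcardK, show p ^ (2 * k * t) = (p ^ (2 * k)) ^ t from pow_mul p (2 * k) t] at hle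
    have h1 : 1 < (p : ℕ) ^ (2 * k) := Nat.one_lt_pow (by omega) hplt
    have := (Nat.pow_le_pow_iff_right h1).mp hle
    omega
  -- all frobenius powers of α are roots of f
  have hrootmem : ∀ i : ℕ, Polynomial.aeval (α ^ ((p : ℕ) ^ (2 * k)) ^ i) f = 0 := by
    intro i
    have h := haeval_pow i α f
    rw [hroot, show p ^ (2 * k * i) = (p ^ (2 * k)) ^ i from pow_mul p (2 * k) i] at h
    rw [h]
    exact zero_pow (pow_ne_zero _ (pow_ne_zero _ hppr.pos.ne'))
  -- every root of f in K is a frobenius power of α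
  have hβroot : ∀ β : K, Polynomial.aeval β f = 0 →
      ∃ i, i < 2 * m + 1 ∧ β = α ^ ((p : ℕ) ^ (2 * k)) ^ i := by
    intro β hβ
    have hfK0 : f.map (algebraMap F K) ≠ 0 := (hf.map (algebraMap F K)).ne_zero
    have hroot_iff : ∀ x : K, x ∈ (f.map (algebraMap F K)).roots.toFinset ↔
        Polynomial.aeval x f = 0 := by
      intro x
      rw [Multiset.mem_toFinset, Polynomial.mem_roots hfK0, Polynomial.IsRoot.def,
        Polynomial.eval_map, ← Polynomial.aeval_def]
    have hinj' : ∀ i j : ℕ, i < j → j < 2 * m + 1 →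
        α ^ ((p : ℕ) ^ (2 * k)) ^ i ≠ α ^ ((p : ℕ) ^ (2 * k)) ^ j := by
      intro i j hij hj heq
      have hfrinj : Function.Injective fun x : K => x ^ p ^ (2 * k * i) := by
        have h := (iterateFrobenius K p (2 * k * i)).injective
        exact h
      have hstep : (α ^ ((p : ℕ) ^ (2 * k)) ^ (j - i)) ^ p ^ (2 * k * i)
          = α ^ ((p : ℕ) ^ (2 * k)) ^ j := by
        rw [← pow_mul, show p ^ (2 * k * i) = (p ^ (2 * k)) ^ i from pow_mul p (2 * k) i,
          ← pow_add]
        congr 2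
        omega
      have hstep2 : α ^ ((p : ℕ) ^ (2 * k)) ^ i = α ^ p ^ (2 * k * i) := by
        rw [show p ^ (2 * k * i) = (p ^ (2 * k)) ^ i from pow_mul p (2 * k) i]
      have heq2 : (fun x : K => x ^ p ^ (2 * k * i)) (α ^ ((p : ℕ) ^ (2 * k)) ^ (j - i))
          = (fun x : K => x ^ p ^ (2 * k * i)) α := by
        simp only []
        rw [hstep, ← heq, hstep2]
      exact horb (j - i) (by omega) (by omega) (hfrinj heq2)
    set S : Finset K := (Finset.range (2 * m + 1)).image
      (fun i => α ^ ((p : ℕ) ^ (2 * k)) ^ i) with hSdef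
    have hScard : S.card = 2 * m + 1 := by
      rw [hSdef, Finset.card_image_of_injOn, Finset.card_range]
      intro i hi j hj hij
      simp only [Finset.coe_range, Set.mem_Iio] at hi hj
      by_contra hne
      rcases Nat.lt_or_ge i j with h | h
      · exact hinj' i j h hj hij
      · exact hinj' j i (by omega) hi hij.symm
    have hSsub : S ⊆ (f.map (algebraMap F K)).roots.toFinset := by
      intro x hx
      rw [hSdef] at hx
      simp only [Finset.mem_image, Finset.mem_range] at hx
      obtain ⟨i, hi, rfl⟩ := hx
      exact (hroot_iff _).mpr (hrootmem i)
    have hcard2 : (f.map (algebraMap F K)).roots.toFinset.card ≤ 2 * m + 1 := by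
      refine le_trans (Multiset.toFinset_card_le _) (le_trans (Polynomial.card_roots' _) ?_)
      rw [Polynomial.natDegree_map, hdeg]
    have hSeq : S = (f.map (algebraMap F K)).roots.toFinset :=
      Finset.eq_of_subset_of_card_le hSsub (by rw [hScard]; exact hcard2)
    have hmem : β ∈ S := by
      rw [hSeq]
      exact (hroot_iff β).mpr hβ
    rw [hSdef] at hmem
    simp only [Finset.mem_image, Finset.mem_range] at hmem
    obtain ⟨i, hi, hieq⟩ := hmem
    exact ⟨i, hi, hieq.symm⟩
  -- order of q² in ZMod y is 2m+1
  haveI : NeZero y := ⟨hypos.ne'⟩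
  have hαQ : α ^ (((p : ℕ) ^ (2 * k)) ^ (2 * m + 1) - 1) = 1 := by
    rw [← hcardK]
    exact hαpow
  have hydvdQ : y ∣ ((p : ℕ) ^ (2 * k)) ^ (2 * m + 1) - 1 :=
    orderOf_dvd_of_pow_eq_one hαQ
  have hiff : ∀ s : ℕ, ((p ^ (2 * k) : ℕ) : ZMod y) ^ s = 1 ↔ y ∣ (p ^ (2 * k)) ^ s - 1 := by
    intro s
    have h1le : 1 ≤ (p ^ (2 * k)) ^ s := Nat.one_le_pow _ _ (pow_pos hppr.pos _)
    rw [← ZMod.natCast_eq_zero_iff, Nat.cast_sub h1le]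
    push_cast
    constructor
    · intro h2; rw [h2]; ring
    · intro h2; linear_combination h2
  set w : ZMod y := ((p ^ k : ℕ) : ZMod y) with hwdef
  have hw2 : w ^ 2 = ((p ^ (2 * k) : ℕ) : ZMod y) := by
    rw [hwdef]
    push_cast
    rw [← pow_mul, Nat.mul_comm]
  have hord : orderOf (w ^ 2) = 2 * m + 1 := by
    have h1 : (w ^ 2) ^ (2 * m + 1) = 1 := by
      rw [hw2]; exact (hiff (2 * m + 1)).mpr hydvdQ
    have hfin2 : IsOfFinOrder (w ^ 2) := isOfFinOrder_iff_pow_eq_one.mpr ⟨2 * m + 1, by omega, h1⟩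
    set e := orderOf (w ^ 2) with hedef
    have hdvd : e ∣ 2 * m + 1 := orderOf_dvd_of_pow_eq_one h1
    have hepos : 0 < e := hfin2.orderOf_pos
    by_contra hne
    have helt : e < 2 * m + 1 := lt_of_le_of_ne (Nat.le_of_dvd (by omega) hdvd) hne
    have hpow1 : ((p ^ (2 * k) : ℕ) : ZMod y) ^ e = 1 := by
      rw [← hw2, hedef]; exact pow_orderOf_eq_one _
    have hydvd2 : y ∣ (p ^ (2 * k)) ^ e - 1 := (hiff _).mp hpow1
    have hα1 : α ^ ((p ^ (2 * k)) ^ e - 1) = 1 := orderOf_dvd_iff_pow_eq_one.mp hydvd2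
    have h1le : 1 ≤ (p ^ (2 * k)) ^ e := Nat.one_le_pow _ _ (pow_pos hppr.pos _)
    have hαfix : α ^ ((p : ℕ) ^ (2 * k)) ^ e = α := by
      calc α ^ ((p : ℕ) ^ (2 * k)) ^ e
          = α ^ ((p ^ (2 * k)) ^ e - 1) * α := by
            rw [← pow_succ]; congr 1; omega
        _ = α := by rw [hα1, one_mul]
    exact horb e hepos helt hαfix
  -- the tilde polynomial and the key root β
  set σ : F →+* F := iterateFrobenius F p k with hσdef
  set β : K := (α ^ p ^ k)⁻¹ with hβdef
  have hσ0 : σ (f.coeff 0) ≠ 0 := fun h => h0 (σ.injective (by rw [h, map_zero]))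
  have hx0 : α ^ p ^ k ≠ 0 := pow_ne_zero _ hα0
  have hmapσ : Polynomial.aeval (α ^ p ^ k) (f.map σ) = 0 := by
    have h3 := haeval_q α f
    rw [hroot, zero_pow (pow_ne_zero k hppr.pos.ne')] at h3
    exact h3
  have hβtilde : Polynomial.aeval β (tildePoly σ f) = 0 := by
    rw [tildePoly, _root_.map_mul]
    letI : Invertible (α ^ p ^ k) := invertibleOfNonzero hx0
    have hβinv : β = ⅟(α ^ p ^ k) := by rw [invOf_eq_inv, hβdef]
    have hrev : Polynomial.aeval β ((f.map σ).reverse) = 0 := by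
      rw [Polynomial.aeval_def, hβinv, Polynomial.eval₂_reverse_eq_zero_iff,
        ← Polynomial.aeval_def]
      exact hmapσ
    rw [hrev, mul_zero]
  have hg0 : (f.map σ).coeff 0 ≠ 0 := by rw [Polynomial.coeff_map]; exact hσ0
  have htr0 : (f.map σ).natTrailingDegree = 0 :=
    Polynomial.natTrailingDegree_eq_zero.mpr (Or.inr hg0)
  have hgdeg : (f.map σ).natDegree = 2 * m + 1 := by
    rw [Polynomial.natDegree_map]; exact hdeg
  have hrevdeg : (f.map σ).reverse.natDegree = 2 * m + 1 := by
    rw [Polynomial.reverse_natDegree, htr0, hgdeg]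
    omega
  have hrevlc : (f.map σ).reverse.leadingCoeff = σ (f.coeff 0) := by
    rw [Polynomial.reverse_leadingCoeff]
    show (f.map σ).coeff (f.map σ).natTrailingDegree = σ (f.coeff 0)
    rw [htr0, Polynomial.coeff_map]
  have htdeg : (tildePoly σ f).natDegree = 2 * m + 1 := by
    rw [tildePoly, Polynomial.natDegree_C_mul (inv_ne_zero hσ0), hrevdeg]
  have htmonic : (tildePoly σ f).Monic := by
    have h1 : (tildePoly σ f).leadingCoeff = 1 := by
      rw [tildePoly, Polynomial.leadingCoeff_mul, Polynomial.leadingCoeff_C, hrevlc,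
        inv_mul_cancel₀ hσ0]
    exact h1
  have hiff1 : tildePoly σ f = f ↔ Polynomial.aeval β f = 0 := by
    constructor
    · intro h
      have h2 := hβtilde
      rw [h] at h2
      exact h2
    · intro h
      have hmin : f = minpoly F β := minpoly.eq_of_irreducible_of_monic hirr h hf
      have hdvdt : f ∣ tildePoly σ f := by
        have h4 := minpoly.dvd F β hβtilde
        rw [← hmin] at h4
        exact h4
      obtain ⟨u, hu⟩ := hdvdt
      have hu0 : u ≠ 0 := by
        rintro rfl
        rw [mul_zero] at hu
        exact htmonic.ne_zero hu
      have hudeg : u.natDegree = 0 := by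
        have h2 := congrArg Polynomial.natDegree hu
        rw [Polynomial.natDegree_mul hf0 hu0, htdeg, hdeg] at h2
        omega
      have hulc : u.leadingCoeff = 1 := by
        have h2 := congrArg Polynomial.leadingCoeff hu
        rw [Polynomial.leadingCoeff_mul, hf.leadingCoeff, one_mul, htmonic.leadingCoeff] at h2
        exact h2.symm
      have hu1 : u = 1 := by
        have h3 := Polynomial.eq_C_of_natDegree_eq_zero hudeg
        rw [h3, Polynomial.leadingCoeff_C] at hulc
        rw [h3, hulc, _root_.map_one]
      rw [hu, hu1, mul_one]
  rw [hiff1]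
  simp only [DtildeSet, Set.mem_setOf_eq]
  constructor
  · intro h
    obtain ⟨i, hi, hβeq⟩ := hβroot β h
    have hprod : α ^ ((p ^ k) ^ (2 * i) + p ^ k) = 1 := by
      rw [pow_add, ← hQpow i]
      have h2 : (α ^ p ^ k) * β = 1 := mul_inv_cancel₀ hx0
      rw [hβeq, mul_comm] at h2
      exact h2
    have hdvd1 : y ∣ (p ^ k) ^ (2 * i) + p ^ k := orderOf_dvd_iff_pow_eq_one.mpr hprod
    exact ⟨hypos, nt_fwd (p ^ k) y m hypos hord ⟨i, hi, hdvd1⟩, nt_min (p ^ k) y m hypos hord⟩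
  · rintro ⟨-, hdvd, -⟩
    have hdvd2 : y ∣ (p ^ k) ^ (2 * (m + 1)) + p ^ k := by
      have he : (p ^ k) ^ (2 * (m + 1)) + p ^ k = p ^ k * ((p ^ k) ^ (2 * m + 1) + 1) := by
        ring
      rw [he]
      exact Dvd.dvd.mul_left hdvd _
    have hprod : α ^ ((p : ℕ) ^ (2 * k)) ^ (m + 1) * α ^ p ^ k = 1 := by
      rw [← pow_add, hQpow (m + 1)]
      exact orderOf_dvd_iff_pow_eq_one.mp hdvd2
    have hβeq : β = α ^ ((p : ℕ) ^ (2 * k)) ^ (m + 1) := by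
      rw [hβdef]
      exact inv_eq_of_mul_eq_one_left hprod
    rw [hβeq]
    exact hrootmem (m + 1)
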